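/- arXiv:1803.10765 — 2 statements merged into one kernel-verified Lean document; each statement's English description precedes it below -/
import Mathlib

section
/- For an n×n complex matrix A and z ∈ ℂ, the following are equivalent: (a) z is an eigenvalue of A + εv₂v₁* for some vectors v₁, v₂ with ‖v₁‖ ≤ 1, ‖v₂‖ ≤ 1; (b) z is an eigenvalue of A + εE for some matrix E with ‖E‖ ≤ 1. -/
open Matrix

noncomputable def matCLM {n : ℕ} (A : Matrix (Fin n) (Fin n) ℂ) :
    EuclideanSpace ℂ (Fin n) →L[ℂ] EuclideanSpace ℂ (Fin n) :=
  Matrix.toEuclideanCLM (𝕜 := ℂ) A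

noncomputable def matOpNorm {n : ℕ} (A : Matrix (Fin n) (Fin n) ℂ) : ℝ := ‖matCLM A‖

def IsEigOf {n : ℕ} (A : Matrix (Fin n) (Fin n) ℂ) (z : ℂ) : Prop :=
  ∃ v : Fin n → ℂ, v ≠ 0 ∧ A.mulVec v = z • v

lemma matCLM_apply {n : ℕ} (A : Matrix (Fin n) (Fin n) ℂ) (x : EuclideanSpace ℂ (Fin n)) :
    WithLp.equiv 2 (Fin n → ℂ) (matCLM A x) = A.mulVec (WithLp.equiv 2 (Fin n → ℂ) x) := by
  simp [matCLM, Matrix.ofLp_toEuclideanCLM, Matrix.toLin'_apply]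

lemma vecMulVec_mulVec' {n : ℕ} (u w x : Fin n → ℂ) :
    (Matrix.vecMulVec u w).mulVec x = (w ⬝ᵥ x) • u := by
  funext i
  simp [Matrix.mulVec, dotProduct, Matrix.vecMulVec_apply, Finset.mul_sum, mul_comm,
    mul_left_comm]

lemma inner_eq' {n : ℕ} (a x : EuclideanSpace ℂ (Fin n)) :
    (star (WithLp.equiv 2 (Fin n → ℂ) a)) ⬝ᵥ (WithLp.equiv 2 (Fin n → ℂ) x)
      = (inner ℂ a x : ℂ) := by
  simp [dotProduct, EuclideanSpace.inner_eq_star_dotProduct, mul_comm]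

lemma norm_vecMulVec {n : ℕ} (v₁ v₂ : EuclideanSpace ℂ (Fin n)) :
    matOpNorm (Matrix.vecMulVec ((WithLp.equiv 2 (Fin n → ℂ)) v₂)
      (star ((WithLp.equiv 2 (Fin n → ℂ)) v₁))) ≤ ‖v₂‖ * ‖v₁‖ := by
  apply ContinuousLinearMap.opNorm_le_bound _ (by positivity)
  intro x
  have h1 : WithLp.equiv 2 (Fin n → ℂ) (matCLM (Matrix.vecMulVec ((WithLp.equiv 2 (Fin n → ℂ)) v₂)
      (star ((WithLp.equiv 2 (Fin n → ℂ)) v₁))) x)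
      = WithLp.equiv 2 (Fin n → ℂ) ((inner ℂ v₁ x : ℂ) • v₂) := by
    rw [matCLM_apply, vecMulVec_mulVec', inner_eq']
    rfl
  have h2 := (WithLp.equiv 2 (Fin n → ℂ)).injective h1
  rw [show matCLM _ x = _ from h2]
  rw [norm_smul]
  calc ‖(inner ℂ v₁ x : ℂ)‖ * ‖v₂‖ ≤ ‖v₁‖ * ‖x‖ * ‖v₂‖ := by
        gcongr; exact norm_inner_le_norm v₁ x
    _ = ‖v₂‖ * ‖v₁‖ * ‖x‖ := by ring

theorem stmt4 {n : ℕ} (A : Matrix (Fin n) (Fin n) ℂ) (z : ℂ) (ε : ℝ) (hε : 0 ≤ ε) :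
    (∃ v₁ v₂ : EuclideanSpace ℂ (Fin n), ‖v₁‖ ≤ 1 ∧ ‖v₂‖ ≤ 1 ∧
        IsEigOf (A + ε • Matrix.vecMulVec ((WithLp.equiv 2 (Fin n → ℂ)) v₂)
          (star ((WithLp.equiv 2 (Fin n → ℂ)) v₁))) z) ↔
      (∃ E : Matrix (Fin n) (Fin n) ℂ, matOpNorm E ≤ 1 ∧ IsEigOf (A + ε • E) z) := by
  constructor
  · rintro ⟨v₁, v₂, h1, h2, hE⟩
    refine ⟨_, ?_, hE⟩
    calc matOpNorm _ ≤ ‖v₂‖ * ‖v₁‖ := norm_vecMulVec v₁ v₂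
      _ ≤ 1 := by nlinarith [norm_nonneg v₁, norm_nonneg v₂]
  · rintro ⟨E, hEnorm, v, hv, hev⟩
    set vE : EuclideanSpace ℂ (Fin n) := (WithLp.equiv 2 (Fin n → ℂ)).symm v with hvE
    have hvE0 : vE ≠ 0 := by
      simpa [hvE] using hv
    have hnorm : ‖vE‖ ≠ 0 := norm_ne_zero_iff.mpr hvE0
    set v₁ : EuclideanSpace ℂ (Fin n) := (‖vE‖⁻¹ : ℂ) • vE with hv₁
    set v₂ : EuclideanSpace ℂ (Fin n) := matCLM E v₁ with hv₂
    have hv₁norm : ‖v₁‖ = 1 := by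
      rw [hv₁, norm_smul]
      simp [hnorm, abs_of_nonneg (norm_nonneg vE)]
    have hv₂norm : ‖v₂‖ ≤ 1 := by
      calc ‖v₂‖ ≤ ‖matCLM E‖ * ‖v₁‖ := (matCLM E).le_opNorm v₁
        _ ≤ 1 * 1 := by
            apply mul_le_mul hEnorm (le_of_eq hv₁norm) (norm_nonneg _) zero_le_one
        _ = 1 := one_mul 1
    refine ⟨v₁, v₂, le_of_eq hv₁norm, hv₂norm, v, hv, ?_⟩
    -- show (A + ε • vecMulVec ...) *ᵥ v = z • v
    have key : (Matrix.vecMulVec ((WithLp.equiv 2 (Fin n → ℂ)) v₂)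
        (star ((WithLp.equiv 2 (Fin n → ℂ)) v₁))).mulVec v = E.mulVec v := by
      rw [vecMulVec_mulVec']
      have hinner : (star ((WithLp.equiv 2 (Fin n → ℂ)) v₁)) ⬝ᵥ v = (‖vE‖ : ℂ) := by
        have : v = WithLp.equiv 2 (Fin n → ℂ) vE := rfl
        rw [this, inner_eq', hv₁, inner_smul_left]
        rw [@inner_self_eq_norm_sq_to_K ℂ]
        simp [hnorm]
        have hne : (‖vE‖ : ℂ) ≠ 0 := by exact_mod_cast hnorm
        field_simp
      rw [hinner]
      have hEv : (WithLp.equiv 2 (Fin n → ℂ)) v₂ = (‖vE‖⁻¹ : ℂ) • E.mulVec v := by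
        rw [hv₂, matCLM_apply, hv₁]
        have : (WithLp.equiv 2 (Fin n → ℂ)) ((‖vE‖⁻¹ : ℂ) • vE) = (‖vE‖⁻¹ : ℂ) • v := rfl
        rw [this, Matrix.mulVec_smul]
      rw [hEv, smul_smul]
      rw [mul_inv_cancel₀ (by exact_mod_cast hnorm), one_smul]
    rw [Matrix.add_mulVec, Matrix.smul_mulVec, key, ← Matrix.smul_mulVec,
      ← Matrix.add_mulVec] at *
    exact hev
end

section
/- Let ε̄ > 0 and A ∈ ℂ^{n×n}. If inf over y ∈ ℝ of ε_b(iy) ≥ ε̄ and all eigenvalues of A have negative real part, then for every matrix E with ‖E‖ < ε̄, every eigenvalue of A + E has negative real part. -/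
noncomputable def smallestSingVal {n : ℕ} (A : Matrix (Fin n) (Fin n) ℂ) : ℝ :=
  sInf {r : ℝ | ∃ u : EuclideanSpace ℂ (Fin n), ‖u‖ = 1 ∧ r = ‖matCLM A u‖}

-- bridge: eigenvalues via unit vectors in EuclideanSpace
lemma eig_iff_unit {n : ℕ} (M : Matrix (Fin n) (Fin n) ℂ) (z : ℂ) :
    IsEigOf M z ↔ ∃ u : EuclideanSpace ℂ (Fin n), ‖u‖ = 1 ∧ matCLM M u = z • u := by
  constructor
  · rintro ⟨v, hv, hMv⟩
    set u0 : EuclideanSpace ℂ (Fin n) := (WithLp.equiv 2 _).symm v with hu0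
    have hu0ne : u0 ≠ 0 := by
      simpa [hu0] using hv
    have hMu0 : matCLM M u0 = z • u0 := by
      simp only [hu0, matCLM, WithLp.equiv_symm_apply, Matrix.toEuclideanCLM_toLp, Matrix.toLin'_apply, hMv]
      rfl
    have hnorm : ‖u0‖ ≠ 0 := by simpa using hu0ne
    refine ⟨(‖u0‖⁻¹ : ℂ) • u0, ?_, ?_⟩
    · rw [norm_smul]
      simp [inv_mul_cancel₀ hnorm]
    · rw [map_smul, hMu0, smul_comm]
  · rintro ⟨u, hu, hMu⟩
    refine ⟨WithLp.equiv 2 _ u, ?_, ?_⟩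
    · intro h
      have : u = 0 := by
        apply (WithLp.equiv 2 _).injective
        simpa using h
      simp [this] at hu
    · have := congrArg (WithLp.equiv 2 _) hMu
      simpa [matCLM, Matrix.toLin'_apply] using this

lemma eig_norm_bound {n : ℕ} (M : Matrix (Fin n) (Fin n) ℂ) (z : ℂ)
    (h : IsEigOf M z) : ‖z‖ ≤ matOpNorm M := by
  obtain ⟨u, hu, hMu⟩ := (eig_iff_unit M z).mp h
  have := (matCLM M).le_opNorm u
  rw [hMu, norm_smul, hu, mul_one, mul_one] at this
  exact this

lemma eig_iff_det {n : ℕ} (M : Matrix (Fin n) (Fin n) ℂ) (z : ℂ) :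
    IsEigOf M z ↔ (M - z • 1).det = 0 := by
  rw [← Matrix.exists_mulVec_eq_zero_iff]
  unfold IsEigOf
  refine exists_congr fun v => and_congr_right fun _ => ?_
  rw [Matrix.sub_mulVec, sub_eq_zero, Matrix.smul_mulVec, Matrix.one_mulVec]

lemma eval_charpoly' {n : ℕ} (M : Matrix (Fin n) (Fin n) ℂ) (z : ℂ) :
    M.charpoly.eval z = (z • (1 : Matrix (Fin n) (Fin n) ℂ) - M).det := by
  rw [Matrix.eval_charpoly, Matrix.scalar_apply]
  simp [Matrix.smul_one_eq_diagonal]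

lemma prod_norm_lower (s : Multiset ℂ) (δ : ℝ) (hδ : 0 ≤ δ)
    (h : ∀ r ∈ s, δ ≤ ‖r‖) : δ ^ Multiset.card s ≤ ‖s.prod‖ := by
  induction s using Multiset.induction with
  | empty => simp
  | cons a s ih =>
    rw [Multiset.prod_cons, norm_mul, Multiset.card_cons, pow_succ, mul_comm (δ ^ _) δ]
    exact mul_le_mul (h a (Multiset.mem_cons_self a s))
      (ih fun r hr => h r (Multiset.mem_cons_of_mem hr))
      (pow_nonneg hδ _) ((hδ.trans (h a (Multiset.mem_cons_self a s))).trans le_rfl)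

lemma root_near {n : ℕ} (M : Matrix (Fin n) (Fin n) ℂ) (z : ℂ) (δ : ℝ) (hδ : 0 < δ)
    (h : ‖(M - z • 1).det‖ < δ ^ n) : ∃ w : ℂ, IsEigOf M w ∧ ‖z - w‖ < δ := by
  set p := M.charpoly with hp
  have hmon : p.Monic := M.charpoly_monic
  have hsplit : p.Splits := IsAlgClosed.splits p
  have hcard : Multiset.card p.roots = n := by
    rw [(Polynomial.splits_iff_card_roots).mp hsplit, hp,
      Matrix.charpoly_natDegree_eq_dim, Fintype.card_fin]
  have hfact : p = (p.roots.map fun a => Polynomial.X - Polynomial.C a).prod :=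
    hsplit.eq_prod_roots_of_monic hmon
  have heval : p.eval z = ((p.roots.map fun a => z - a)).prod := by
    conv_lhs => rw [hfact]
    rw [Polynomial.eval_multiset_prod, Multiset.map_map]
    simp
  have hnorm_eval : ‖p.eval z‖ = ‖(M - z • 1).det‖ := by
    rw [eval_charpoly']
    have : z • (1 : Matrix (Fin n) (Fin n) ℂ) - M = -(M - z • 1) := by abel
    rw [this, Matrix.det_neg, norm_mul, norm_pow]
    simp
  by_contra hcon
  push_neg at hcon
  have hall : ∀ r ∈ p.roots.map fun a => z - a, δ ≤ ‖r‖ := by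
    rintro r hr
    obtain ⟨a, ha, rfl⟩ := Multiset.mem_map.mp hr
    have haroot : p.eval a = 0 := (Polynomial.isRoot_of_mem_roots ha)
    have : IsEigOf M a := by
      rw [eig_iff_det]
      have h1 : (a • (1 : Matrix (Fin n) (Fin n) ℂ) - M).det = 0 := by
        rw [← eval_charpoly']; exact haroot
      have h2 : a • (1 : Matrix (Fin n) (Fin n) ℂ) - M = -(M - a • 1) := by abel
      rw [h2, Matrix.det_neg, mul_eq_zero] at h1
      rcases h1 with h1 | h1
      · exact absurd h1 (pow_ne_zero _ (neg_ne_zero.mpr one_ne_zero))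
      · exact h1
    exact hcon a this
  have hlow := prod_norm_lower _ δ hδ.le hall
  rw [← heval, Multiset.card_map, hcard, hnorm_eval] at hlow
  exact absurd h (not_lt.mpr hlow)

lemma no_imag_eig {n : ℕ} (A : Matrix (Fin n) (Fin n) ℂ) (ε' : ℝ)
    (hb : ∀ y : ℝ,
      ε' ≤ smallestSingVal (A - ((y : ℂ) * Complex.I) • (1 : Matrix (Fin n) (Fin n) ℂ)))
    (M : Matrix (Fin n) (Fin n) ℂ) (hM : matOpNorm M < ε') (y : ℝ) :
    ¬ IsEigOf (A + M) ((y : ℂ) * Complex.I) := by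
  intro h
  obtain ⟨u, hu, hMu⟩ := (eig_iff_unit _ _).mp h
  set c : ℂ := (y : ℂ) * Complex.I with hc
  have hadd : matCLM (A + M) u = matCLM A u + matCLM M u := by
    simp [matCLM, map_add]
  have hsub : matCLM (A - c • 1) u = matCLM A u - c • u := by
    simp [matCLM, map_sub, map_smul, Matrix.toEuclideanCLM]
  have key : matCLM (A - c • 1) u = -(matCLM M u) := by
    rw [hsub]
    have : matCLM A u = c • u - matCLM M u := by
      rw [← hMu, hadd]; abel
    rw [this]; abel
  have hr : ‖matCLM (A - c • 1) u‖ < ε' := by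
    rw [key, norm_neg]
    calc ‖matCLM M u‖ ≤ ‖matCLM M‖ * ‖u‖ := (matCLM M).le_opNorm u
    _ = matOpNorm M := by rw [hu, mul_one]; rfl
    _ < ε' := hM
  have hbdd : BddBelow {r : ℝ | ∃ u : EuclideanSpace ℂ (Fin n), ‖u‖ = 1 ∧
      r = ‖matCLM (A - c • 1) u‖} := by
    refine ⟨0, ?_⟩
    rintro r ⟨u', -, rfl⟩
    exact norm_nonneg _
  have hle : smallestSingVal (A - c • 1) ≤ ‖matCLM (A - c • 1) u‖ :=
    csInf_le hbdd ⟨u, hu, rfl⟩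
  have := hb y
  rw [← hc] at this
  linarith

theorem stmt7 {n : ℕ} (A : Matrix (Fin n) (Fin n) ℂ) (ε' : ℝ) (hε' : 0 < ε')
    (hb : ∀ y : ℝ,
      ε' ≤ smallestSingVal (A - ((y : ℂ) * Complex.I) • (1 : Matrix (Fin n) (Fin n) ℂ)))
    (hstab : ∀ z : ℂ, IsEigOf A z → z.re < 0) :
    ∀ E : Matrix (Fin n) (Fin n) ℂ, matOpNorm E < ε' →
      ∀ z : ℂ, IsEigOf (A + E) z → z.re < 0 := by
  intro E hE z₀ hz₀
  by_contra hcon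
  push_neg at hcon
  -- the set of parameters t where A + tE has an eigenvalue with nonneg real part
  set T : Set ℝ := {t : ℝ | t ∈ Set.Icc (0:ℝ) 1 ∧
    ∃ z : ℂ, 0 ≤ z.re ∧ IsEigOf (A + (t : ℂ) • E) z} with hT
  have h1T : (1 : ℝ) ∈ T := by
    refine ⟨⟨zero_le_one, le_rfl⟩, z₀, hcon, ?_⟩
    simpa using hz₀
  have hTne : T.Nonempty := ⟨1, h1T⟩
  have hTbdd : BddBelow T := ⟨0, fun t ht => ht.1.1⟩
  -- no eigenvalue on the imaginary axis, for any t ∈ [0,1]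
  have haxis : ∀ t : ℝ, t ∈ Set.Icc (0:ℝ) 1 → ∀ z : ℂ, z.re = 0 →
      ¬ IsEigOf (A + (t : ℂ) • E) z := by
    intro t ht z hzre hzeig
    have hznorm : matOpNorm ((t : ℂ) • E) < ε' := by
      have h2 : matOpNorm ((t : ℂ) • E) = |t| * matOpNorm E := by
        unfold matOpNorm
        rw [show matCLM ((t:ℂ) • E) = (t:ℂ) • matCLM E from map_smul _ _ _]
        rw [norm_smul ((t:ℂ)) (matCLM E), Complex.norm_real, Real.norm_eq_abs]
      rw [h2]
      calc |t| * matOpNorm E ≤ 1 * matOpNorm E := by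
            apply mul_le_mul_of_nonneg_right _ (norm_nonneg _)
            rw [abs_le]; exact ⟨by linarith [ht.1], ht.2⟩
      _ = matOpNorm E := one_mul _
      _ < ε' := hE
    have hz' : z = (z.im : ℂ) * Complex.I := by
      apply Complex.ext <;> simp [hzre]
    rw [hz'] at hzeig
    exact no_imag_eig A ε' hb _ hznorm z.im hzeig
  -- T is closed (compactness argument)
  set R : ℝ := matOpNorm A + matOpNorm E with hR
  set C : Set (ℝ × ℂ × EuclideanSpace ℂ (Fin n)) :=
    {p | p.1 ∈ Set.Icc (0:ℝ) 1 ∧ 0 ≤ p.2.1.re ∧ ‖p.2.2‖ = 1 ∧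
      matCLM A p.2.2 + (p.1 : ℂ) • matCLM E p.2.2 = p.2.1 • p.2.2} with hC
  have hCclosed : IsClosed C := by
    apply IsClosed.inter
    · exact isClosed_Icc.preimage continuous_fst
    apply IsClosed.inter
    · exact isClosed_le continuous_const
        (Complex.continuous_re.comp (continuous_fst.comp continuous_snd))
    apply IsClosed.inter
    · exact isClosed_eq (continuous_norm.comp (continuous_snd.comp continuous_snd))
        continuous_const
    · exact isClosed_eq
        (((matCLM A).continuous.comp (continuous_snd.comp continuous_snd)).add
          ((Complex.continuous_ofReal.comp continuous_fst).smul
            ((matCLM E).continuous.comp (continuous_snd.comp continuous_snd))))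
        ((continuous_fst.comp continuous_snd).smul (continuous_snd.comp continuous_snd))
  have hCsub : C ⊆ (Set.Icc (0:ℝ) 1) ×ˢ
      ((Metric.closedBall (0:ℂ) R) ×ˢ (Metric.sphere (0 : EuclideanSpace ℂ (Fin n)) 1)) := by
    rintro ⟨t, z, u⟩ ⟨ht, hzre, hu, heq⟩
    refine ⟨ht, ?_, ?_⟩
    · rw [Metric.mem_closedBall, dist_zero_right]
      have : ‖z‖ = ‖matCLM A u + (t : ℂ) • matCLM E u‖ := by
        rw [heq, norm_smul, hu, mul_one]
      rw [this]
      calc ‖matCLM A u + (t : ℂ) • matCLM E u‖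
          ≤ ‖matCLM A u‖ + ‖(t : ℂ) • matCLM E u‖ := norm_add_le _ _
      _ ≤ matOpNorm A + matOpNorm E := by
          apply add_le_add
          · calc ‖matCLM A u‖ ≤ ‖matCLM A‖ * ‖u‖ := (matCLM A).le_opNorm u
            _ = matOpNorm A := by rw [hu, mul_one]; rfl
          · rw [norm_smul]
            calc ‖(t:ℂ)‖ * ‖matCLM E u‖ ≤ 1 * (‖matCLM E‖ * ‖u‖) := by
                  apply mul_le_mul _ ((matCLM E).le_opNorm u) (norm_nonneg _) zero_le_one
                  simpa using abs_le.mpr ⟨by linarith [ht.1], ht.2⟩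
            _ = matOpNorm E := by rw [hu, mul_one, one_mul]; rfl
    · rw [mem_sphere_iff_norm, sub_zero]; exact hu
  have hCcompact : IsCompact C :=
    ((isCompact_Icc).prod ((isCompact_closedBall _ _).prod (isCompact_sphere _ _))).of_isClosed_subset
      hCclosed hCsub
  have hTC : T = Prod.fst '' C := by
    ext t
    constructor
    · rintro ⟨ht, z, hzre, hzeig⟩
      obtain ⟨u, hu, hMu⟩ := (eig_iff_unit _ _).mp hzeig
      refine ⟨(t, z, u), ⟨ht, hzre, hu, ?_⟩, rfl⟩
      have : matCLM (A + (t : ℂ) • E) u = matCLM A u + (t : ℂ) • matCLM E u := by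
        rw [show matCLM (A + (t:ℂ) • E) = matCLM A + (t:ℂ) • matCLM E by
          unfold matCLM; rw [map_add, map_smul]]
        rfl
      rw [← this, hMu]
    · rintro ⟨⟨t', z, u⟩, ⟨ht, hzre, hu, heq⟩, rfl⟩
      refine ⟨ht, z, hzre, (eig_iff_unit _ _).mpr ⟨u, hu, ?_⟩⟩
      have : matCLM (A + (t' : ℂ) • E) u = matCLM A u + (t' : ℂ) • matCLM E u := by
        rw [show matCLM (A + (t':ℂ) • E) = matCLM A + (t':ℂ) • matCLM E by
          unfold matCLM; rw [map_add, map_smul]]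
        rfl
      rw [this, heq]
  have hTclosed : IsClosed T := by
    rw [hTC]
    exact (hCcompact.image continuous_fst).isClosed
  -- the infimum of T belongs to T
  set t₀ : ℝ := sInf T with ht₀
  have ht₀T : t₀ ∈ T := hTclosed.csInf_mem hTne hTbdd
  obtain ⟨ht₀Icc, z₁, hz₁re, hz₁eig⟩ := ht₀T
  have hz₁pos : 0 < z₁.re :=
    lt_of_le_of_ne hz₁re (fun h => haxis t₀ ht₀Icc z₁ h.symm hz₁eig)
  have ht₀pos : 0 < t₀ := by
    rcases lt_or_eq_of_le ht₀Icc.1 with h | h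
    · exact h
    · exfalso
      rw [← h] at hz₁eig
      have : IsEigOf A z₁ := by simpa using hz₁eig
      linarith [hstab z₁ this]
  -- continuity of the determinant in t
  set δ : ℝ := z₁.re with hδ
  set g : ℝ → ℝ := fun t => ‖(A + (t : ℂ) • E - z₁ • 1).det‖ with hg
  have hgcont : Continuous g := by
    apply Continuous.norm
    apply Continuous.matrix_det
    exact (continuous_const.add (Complex.continuous_ofReal.smul continuous_const)).sub
      continuous_const
  have hg0 : g t₀ = 0 := by
    rw [hg]
    simp only
    rw [(eig_iff_det _ _).mp hz₁eig, norm_zero]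
  have hδn : (0:ℝ) < δ ^ n := pow_pos hz₁pos n
  have : ∀ᶠ t in nhds t₀, g t < δ ^ n := by
    have : Set.Iio (δ ^ n) ∈ nhds (g t₀) := by
      rw [hg0]; exact Iio_mem_nhds hδn
    exact hgcont.continuousAt.eventually_mem this
  obtain ⟨η, hη, hball⟩ := Metric.eventually_nhds_iff.mp this
  set t₁ : ℝ := max 0 (t₀ - η / 2) with ht₁
  have ht₁lt : t₁ < t₀ := by
    apply max_lt ht₀pos
    linarith
  have ht₁dist : dist t₁ t₀ < η := by
    rw [Real.dist_eq, abs_sub_lt_iff]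
    constructor
    · linarith
    · have : t₀ - η / 2 ≤ t₁ := le_max_right _ _
      linarith
  have hgt₁ : g t₁ < δ ^ n := hball ht₁dist
  obtain ⟨w, hweig, hwclose⟩ := root_near (A + (t₁ : ℂ) • E) z₁ δ hz₁pos hgt₁
  have hwre : 0 ≤ w.re := by
    have h1 : z₁.re - w.re ≤ ‖z₁ - w‖ := by
      calc z₁.re - w.re = (z₁ - w).re := by simp
      _ ≤ |(z₁ - w).re| := le_abs_self _
      _ ≤ ‖z₁ - w‖ := Complex.abs_re_le_norm _
    linarith [hwclose, h1]
  have ht₁T : t₁ ∈ T := by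
    refine ⟨⟨le_max_left _ _, ?_⟩, w, hwre, hweig⟩
    calc t₁ ≤ t₀ := ht₁lt.le
    _ ≤ 1 := ht₀Icc.2
  have : t₀ ≤ t₁ := csInf_le hTbdd ht₁T
  linarith
end
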